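/- Let n = pq with p, q distinct primes and λ = lcm(p-1, q-1). Then for every w coprime to n, w^(nλ) ≡ 1 (mod n²). -/
import Mathlib

lemma aux_pow_prime_sq (p : ℕ) (hp : p.Prime) (w : ℤ)
    (hwp : IsCoprime w (p : ℤ)) (m : ℕ) (hdvd : p * (p - 1) ∣ m) :
    w ^ m ≡ 1 [ZMOD ((p ^ 2 : ℕ) : ℤ)] := by
  have hcop : IsCoprime w ((p ^ 2 : ℕ) : ℤ) := by
    push_cast
    exact hwp.pow_right
  have hunit : IsUnit ((w : ZMod (p ^ 2))) := by
    have := hcop.map (Int.castRingHom (ZMod (p ^ 2)))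
    simp only [map_intCast, map_natCast, ZMod.natCast_self] at this
    exact isCoprime_zero_right.mp this
  have htot : (p ^ 2).totient = p * (p - 1) := by
    rw [Nat.totient_prime_pow hp (by norm_num)]
    ring_nf
  have h1 : ((w : ZMod (p ^ 2))) ^ (p ^ 2).totient = 1 := by
    have := ZMod.pow_totient hunit.unit
    have h := congrArg (Units.val) this
    rw [Units.val_pow_eq_pow_val, IsUnit.unit_spec, Units.val_one] at h
    exact h
  obtain ⟨t, rfl⟩ := hdvd
  rw [← htot]
  have : ((w ^ ((p ^ 2).totient * t) : ℤ) : ZMod (p ^ 2)) = ((1 : ℤ) : ZMod (p ^ 2)) := by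
    push_cast
    rw [pow_mul, h1, one_pow]
  exact (ZMod.intCast_eq_intCast_iff _ _ _).mp this

/-- Carmichael-type fact mod n²: for n = pq, w coprime to n, w^(nλ) ≡ 1 (mod n²). -/
theorem paillier_carmichael_sq (p q : ℕ) (hp : p.Prime) (hq : q.Prime) (hpq : p ≠ q)
    (w : ℤ) (hw : IsCoprime w ((p * q : ℕ) : ℤ)) :
    w ^ ((p * q) * Nat.lcm (p - 1) (q - 1)) ≡ 1 [ZMOD ((p * q : ℕ) ^ 2 : ℕ)] := by
  have hw' : IsCoprime w ((p : ℤ) * (q : ℤ)) := by push_cast at hw; exact hw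
  have hwp : IsCoprime w (p : ℤ) := hw'.of_isCoprime_of_dvd_right ⟨q, rfl⟩
  have hwq : IsCoprime w (q : ℤ) := hw'.of_isCoprime_of_dvd_right ⟨p, mul_comm _ _⟩
  set m := (p * q) * Nat.lcm (p - 1) (q - 1) with hm
  have hdp : p * (p - 1) ∣ m := by
    obtain ⟨k, hk⟩ := Nat.dvd_lcm_left (p - 1) (q - 1)
    exact ⟨q * k, by rw [hm, hk]; ring⟩
  have hdq : q * (q - 1) ∣ m := by
    obtain ⟨k, hk⟩ := Nat.dvd_lcm_right (p - 1) (q - 1)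
    exact ⟨p * k, by rw [hm, hk]; ring⟩
  have h1 := aux_pow_prime_sq p hp w hwp m hdp
  have h2 := aux_pow_prime_sq q hq w hwq m hdq
  have hcopN : Nat.Coprime (p ^ 2) (q ^ 2) :=
    Nat.Coprime.pow 2 2 ((Nat.coprime_primes hp hq).mpr hpq)
  have hcop : (((p ^ 2 : ℕ) : ℤ)).natAbs.Coprime (((q ^ 2 : ℕ) : ℤ)).natAbs := by
    rw [Int.natAbs_natCast, Int.natAbs_natCast]; exact hcopN
  have h3 := (Int.modEq_and_modEq_iff_modEq_mul hcop).mp ⟨h1, h2⟩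
  have heq : (((p * q : ℕ) ^ 2 : ℕ) : ℤ) = ((p ^ 2 : ℕ) : ℤ) * ((q ^ 2 : ℕ) : ℤ) := by
    push_cast; ring
  unfold Int.ModEq at h3 ⊢
  rw [heq]
  exact h3
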